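/- arXiv:2405.19918 — 2 statements merged into one kernel-verified Lean document; each statement's English description precedes it below -/
import Mathlib

section
/- For k ≥ r ≥ 3 and p,t ≥ 0, if π is a partition in C_<(k,r|p,t) such that π^{(2)}_p ≥ 2t+6, then 2t+2 and 2t+4 cannot both occur as parts of π. -/
namespace Bressoud

/-- A partition: a weakly decreasing list of positive integers. -/
structure Partition where
  parts : List ℕ
  pos : ∀ x ∈ parts, 0 < x
  sorted : parts.Pairwise (· ≥ ·)

namespace Partition

/-- `|π|`, the sum of the parts of `π`. -/
def size (π : Partition) : ℕ := π.parts.sum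

/-- `ℓ(π)`, the number of parts of `π`. -/
def numParts (π : Partition) : ℕ := π.parts.length

end Partition

lemma exists_pos_not_mem (s : List ℕ) : ∃ n, 0 < n ∧ n ∉ s := by
  refine ⟨s.sum + 1, Nat.succ_pos _, fun h => ?_⟩
  have := List.single_le_sum (l := s) (fun x _ => Nat.zero_le x) _ h
  omega

/-- The least positive integer not occurring in `s`. -/
def mex1 (s : List ℕ) : ℕ := Nat.find (exists_pos_not_mem s)

/-- Parts `p ≥ q` conflict (must receive different marks) when `p - q ≤ 2`,
with strict inequality when `p` is odd. -/
def conflict (p q : ℕ) : Bool :=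
  if p % 2 = 1 then decide (p - q < 2) else decide (p - q ≤ 2)

/-- Greedy computation of the Göllnitz–Gordon marking: the parts are processed
from smallest to largest (second argument: remaining parts in increasing
order; first argument: already processed parts with their marks), and each
part receives the least positive mark different from the marks of all already
processed conflicting parts. -/
def ggAux : List (ℕ × ℕ) → List ℕ → List (ℕ × ℕ)
  | acc, [] => acc
  | acc, p :: rest =>
      ggAux ((p, mex1 ((acc.filter fun q => conflict p q.1).map Prod.snd)) :: acc) rest

/-- The Göllnitz–Gordon marking `GG(π)` of `π`, as a list of (part, mark)
pairs in decreasing order of parts. -/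
def ggMarks (π : Partition) : List (ℕ × ℕ) := ggAux [] π.parts.reverse

/-- There is an `m`-marked part equal to `x` in `GG(π)`. -/
def Marked (π : Partition) (x m : ℕ) : Prop := (x, m) ∈ ggMarks π

instance (π : Partition) (x m : ℕ) : Decidable (Marked π x m) := by
  unfold Marked; infer_instance

/-- The `i`-th row of `GG(π)`: the `i`-marked parts, in decreasing order. -/
def row (π : Partition) (i : ℕ) : List ℕ :=
  ((ggMarks π).filter fun q => q.2 == i).map Prod.fst

/-- `N_i(π)`: the number of `i`-marked parts of `π`. -/
def Nmk (π : Partition) (i : ℕ) : ℕ := (row π i).length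

/-- `π^{(i)}_j` as a natural number (meaningful for `1 ≤ j ≤ N_i(π)`;
junk value `0` otherwise). -/
def nth (π : Partition) (i j : ℕ) : ℕ := (row π i).getD (j - 1) 0

/-- The canonical embedding of the natural numbers into `EReal`. -/
noncomputable def natE (n : ℕ) : EReal := ((n : ℝ) : EReal)

/-- `π^{(i)}_j` as an extended real, with the conventions `π^{(i)}_0 = +∞`
and `π^{(i)}_j = -∞` for `j > N_i(π)`. -/
noncomputable def rowVal (π : Partition) (i j : ℕ) : EReal :=
  if j = 0 then ⊤
  else
    match (row π i)[j - 1]? with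
    | some x => natE x
    | none => ⊥

/-- The largest `l ≥ 0` such that there is no odd part of `π` greater than or
equal to `π^{(2)}_l` (the indices `1 ≤ j ≤ N₂(π)` with this property form an
initial segment, so this is also their number). -/
def bigL (π : Partition) : ℕ :=
  ((List.range' 1 (Nmk π 2)).filter fun j =>
    decide (∀ x ∈ π.parts, x % 2 = 1 → x < nth π 2 j)).length

/-- `startPair π b = (starting type of π^{(2)}_b, s_b(π))` for `1 ≤ b ≤ N₂(π)`.
Starting types are encoded by integers: `-1` stands for `s₋₁`, and `0,1,2,3`
for `s₀,s₁,s₂,s₃`; the value `9` is a junk value used when no case applies. -/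
def startPair (π : Partition) : ℕ → ℤ × ℕ
  | 0 => (9, 0)
  | b + 1 =>
    let v := nth π 2 (b + 1)
    if bigL π < b + 1 then (-1, 0)
    else
      let okLow : Bool :=
        if b = 0 then !decide ((v + 2) ∈ π.parts)
        else !decide (Marked π (v + 2) 1) || decide ((startPair π b).2 = v + 2)
      let ok2 : Bool :=
        if b = 0 then decide (Marked π (v + 2) 1)
        else decide (Marked π (v + 2) 1) && !decide ((startPair π b).2 = v + 2)
      if decide (Marked π (v - 1) 1) && okLow then (0, v - 1)
      else if decide (Marked π (v - 2) 1) && okLow then (1, v - 2)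
      else if ok2 then (2, v + 2)
      else if decide (Marked π v 1) then (3, v)
      else (9, 0)

/-- The starting type of `π^{(2)}_b`, encoded as an integer. -/
def startType (π : Partition) (b : ℕ) : ℤ := (startPair π b).1

/-- The set `C(k,r)`: partitions with no repeated odd part, in which the parts
equal to `1` and `2` have marks at most `r - 1`, and whose Göllnitz–Gordon
marking has at most `k - 1` rows. -/
def C (k r : ℕ) : Set Partition :=
  { π | (∀ x, x % 2 = 1 → π.parts.count x ≤ 1) ∧
        (∀ x m, Marked π x m → x ≤ 2 → m ≤ r - 1) ∧
        (∀ x m, Marked π x m → m ≤ k - 1) }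

/-- The set `C_<(k,r|p,t)`. -/
noncomputable def Clt (k r p t : ℕ) : Set Partition :=
  { π | π ∈ C k r ∧
        (∀ x ∈ π.parts, x % 2 = 1 → x < 2 * t + 1) ∧
        rowVal π 2 (p + 1) < natE (2 * t + 1) ∧
        natE (2 * t + 1) < rowVal π 2 p ∧
        (rowVal π 2 p = natE (2 * t + 2) →
          startType π p = 2 ∨ startType π p = 3) ∧
        (rowVal π 2 (p + 1) = natE (2 * t) →
          startType π (p + 1) = 0 ∨ startType π (p + 1) = 1) }

/-- The set `C_=(k,r|p,t)`. -/
noncomputable def Ceq (k r p t : ℕ) : Set Partition :=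
  { π | π ∈ C k r ∧
        (2 * t + 1) ∈ π.parts ∧
        (∀ x ∈ π.parts, x % 2 = 1 → x ≤ 2 * t + 1) ∧
        (∀ m, Marked π (2 * t + 1) m → m ≤ 2) ∧
        natE (2 * t + 2) ≤ rowVal π 2 p ∧
        rowVal π 2 (p + 1) ≤ natE (2 * t + 2) ∧
        ((∃ j, 1 ≤ j ∧ j ≤ Nmk π 2 ∧ nth π 2 j = 2 * t + 2 ∧ startType π j = 0) →
          rowVal π 2 (p + 1) = natE (2 * t + 2) ∧
          ∃ i, 1 ≤ i ∧ i ≤ p + 1 ∧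
            nth π 2 i = 2 * t + 2 + 4 * (p + 1 - i) ∧
            π.parts.count (2 * t + 2 + 4 * (p + 1 - i)) = 1) ∧
        ((∃ j, 1 ≤ j ∧ j ≤ Nmk π 2 ∧ nth π 2 j = 2 * t + 2 ∧ startType π j = 2) →
          rowVal π 2 p = natE (2 * t + 2)) ∧
        ((2 * t + 2) ∈ π.parts → ¬ Marked π (2 * t + 2) 2 →
          rowVal π 2 p = natE (2 * t + 4) ∧ startType π p = 3 ∧
          ∃ i, 1 ≤ i ∧ i ≤ p ∧
            nth π 2 i = 2 * t + 4 + 4 * (p - i) ∧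
            (2 * t + 4 + 4 * (p - i) + 2) ∉ π.parts) }

/-- The first starting cluster index `p₁` of `π` (with `p₀ = p + 1`): the least
`j ≥ 1` such that `π^{(2)}_j = π^{(2)}_p + 4(p - j)` and all of
`π^{(2)}_j, …, π^{(2)}_p` have the same starting type as `π^{(2)}_p`. -/
def firstCluster (π : Partition) (p : ℕ) : ℕ :=
  ((List.range' 1 p).filter fun j =>
    (List.range' j (p + 1 - j)).all fun i =>
      decide (nth π 2 i = nth π 2 p + 4 * (p - i)) &&
      decide (startType π i = startType π p)).headD p

/-- The set `ℰ(k,r)` of partitions in `C(k,r)` with no odd parts. -/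
def E (k r : ℕ) : Set Partition :=
  { π | π ∈ C k r ∧ ∀ x ∈ π.parts, x % 2 = 0 }

/-- `C_<(k,r|m) = ⋃_{p+t=m} C_<(k,r|p,t)`. -/
noncomputable def Cltm (k r m : ℕ) : Set Partition :=
  { π | ∃ p t, p + t = m ∧ π ∈ Clt k r p t }

/-- `C_=(k,r|m) = ⋃_{p+t=m} C_=(k,r|p,t)`. -/
noncomputable def Ceqm (k r m : ℕ) : Set Partition :=
  { π | ∃ p t, p + t = m ∧ π ∈ Ceq k r p t }

/-- `I_N`: partitions into distinct odd parts, each at least `2N + 1`. -/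
def Iset (N : ℕ) : Set Partition :=
  { ζ | (∀ x ∈ ζ.parts, x % 2 = 1 ∧ 2 * N + 1 ≤ x) ∧ ζ.parts.Nodup }

/-- `F(3,3)`: pairs `(π, ζ)` with `π ∈ ℰ(3,3)` and `ζ ∈ I_{N₂(π)}`. -/
noncomputable def F33 : Set (Partition × Partition) :=
  { pq | pq.1 ∈ E 3 3 ∧ pq.2 ∈ Iset (Nmk pq.1 2) }


/-! ### Auxiliary lemmas for Corollary 2.7 -/

lemma mex1_pos (s : List ℕ) : 0 < mex1 s := (Nat.find_spec (exists_pos_not_mem s)).1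

lemma mex1_not_mem (s : List ℕ) : mex1 s ∉ s := (Nat.find_spec (exists_pos_not_mem s)).2

lemma mex1_eq {s : List ℕ} {m : ℕ} (h0 : 0 < m) (hm : m ∉ s)
    (hlt : ∀ j, 0 < j → j < m → j ∈ s) : mex1 s = m := by
  rw [mex1, Nat.find_eq_iff]
  refine ⟨⟨h0, hm⟩, fun n hn hP => ?_⟩
  rcases Nat.eq_zero_or_pos n with h | h
  · omega
  · exact hP.2 (hlt n h hn)

lemma ggAux_append (l₁ l₂ : List ℕ) (acc : List (ℕ × ℕ)) :
    ggAux acc (l₁ ++ l₂) = ggAux (ggAux acc l₁) l₂ := by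
  induction l₁ generalizing acc with
  | nil => rfl
  | cons a l ih => simp only [List.cons_append, List.append_eq, ggAux, ih]

lemma suffix_ggAux (acc : List (ℕ × ℕ)) (l : List ℕ) : acc <:+ ggAux acc l := by
  induction l generalizing acc with
  | nil => exact List.suffix_rfl
  | cons a l ih => exact (List.suffix_cons _ _).trans (ih _)

lemma mem_ggAux_of_mem_acc {acc : List (ℕ × ℕ)} {l : List ℕ} {pr : ℕ × ℕ}
    (h : pr ∈ acc) : pr ∈ ggAux acc l :=
  (suffix_ggAux acc l).subset h

lemma ggAux_spec (l : List ℕ) (acc : List (ℕ × ℕ)) {x m : ℕ}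
    (h : (x, m) ∈ ggAux acc l) :
    (x, m) ∈ acc ∨ ∃ l₁ l₂, l = l₁ ++ x :: l₂ ∧
      m = mex1 (((ggAux acc l₁).filter fun q => conflict x q.1).map Prod.snd) := by
  induction l generalizing acc with
  | nil => exact .inl h
  | cons a l ih =>
    rcases ih _ h with h' | ⟨l₁, l₂, rfl, hm⟩
    · rcases List.mem_cons.mp h' with h'' | h''
      · rw [Prod.mk.injEq] at h''
        exact .inr ⟨[], l, by simp [h''.1], by rw [h''.1, h''.2]; rfl⟩
      · exact .inl h''
    · exact .inr ⟨a :: l₁, l₂, rfl, hm⟩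

lemma fst_mem_ggAux {acc : List (ℕ × ℕ)} {l : List ℕ} {x m : ℕ}
    (h : (x, m) ∈ ggAux acc l) : (x, m) ∈ acc ∨ x ∈ l := by
  rcases ggAux_spec l acc h with h | ⟨l₁, l₂, rfl, -⟩
  · exact .inl h
  · exact .inr (by simp)

lemma marked_mem {π : Partition} {x m : ℕ} (h : Marked π x m) : x ∈ π.parts := by
  rcases fst_mem_ggAux h with h' | h'
  · simp at h'
  · exact List.mem_reverse.mp h'

lemma rev_sorted (π : Partition) : π.parts.reverse.Pairwise (· ≤ ·) := by
  rw [List.pairwise_reverse]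
  exact π.sorted

lemma conflict_even_iff {x q : ℕ} (hx : x % 2 = 0) : conflict x q = true ↔ x - q ≤ 2 := by
  unfold conflict
  rw [if_neg (by omega)]
  simp

lemma marked_excl {π : Partition} {x q m : ℕ} (hx : Marked π x m) (hq : Marked π q m)
    (hlt : q < x) (hc : conflict x q = true) : False := by
  rcases ggAux_spec _ _ hx with h | ⟨l₁, l₂, heq, hm⟩
  · simp at h
  · set rest := ggAux ([] : List (ℕ × ℕ)) l₁ with hrest
    have hM : ggMarks π = ggAux ((x, m) :: rest) l₂ := by
      rw [ggMarks, heq, ggAux_append, hm]; rfl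
    have hs : (l₁ ++ x :: l₂).Pairwise (· ≤ ·) := heq ▸ rev_sorted π
    have hl₂ : ∀ b ∈ l₂, x ≤ b :=
      (List.pairwise_cons.mp (List.pairwise_append.mp hs).2.1).1
    have hq' : (q, m) ∈ rest := by
      have hq2 : (q, m) ∈ ggAux ((x, m) :: rest) l₂ := by rw [← hM]; exact hq
      rcases fst_mem_ggAux hq2 with h' | h'
      · rcases List.mem_cons.mp h' with h'' | h''
        · exact absurd (show q = x from congrArg Prod.fst h'') (by omega)
        · exact h''
      · exact absurd (hl₂ _ h') (by omega)
    have : m ∈ ((rest.filter fun q => conflict x q.1).map Prod.snd) :=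
      List.mem_map.mpr ⟨(q, m), List.mem_filter.mpr ⟨hq', hc⟩, rfl⟩
    exact mex1_not_mem _ (hm ▸ this)

lemma first_decomp {x : ℕ} {l : List ℕ} (h : x ∈ l) :
    ∃ l₁ l₂, l = l₁ ++ x :: l₂ ∧ x ∉ l₁ := by
  induction l with
  | nil => simp at h
  | cons a l ih =>
    by_cases hax : a = x
    · subst hax
      exact ⟨[], l, rfl, by simp⟩
    · have hx : x ∈ l := by
        rcases List.mem_cons.mp h with h | h
        · exact absurd h.symm hax
        · exact h
      obtain ⟨l₁, l₂, rfl, hn⟩ := ih hx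
      refine ⟨a :: l₁, l₂, rfl, ?_⟩
      simp only [List.mem_cons, not_or]
      exact ⟨fun e => hax e.symm, hn⟩

lemma marked_of_mex {π : Partition} {x m : ℕ} (hx : x ∈ π.parts) (h0 : 0 < m)
    (hblock : ∀ j, 0 < j → j < m → ∃ q, q < x ∧ conflict x q = true ∧ Marked π q j)
    (hfree : ∀ q, q < x → conflict x q = true → ¬ Marked π q m) :
    Marked π x m := by
  obtain ⟨l₁, l₂, heq, hnot⟩ := first_decomp (List.mem_reverse.mpr hx)
  set rest := ggAux ([] : List (ℕ × ℕ)) l₁ with hrest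
  set S := ((rest.filter fun q => conflict x q.1).map Prod.snd) with hS
  have hM : ggMarks π = ggAux ((x, mex1 S) :: rest) l₂ := by
    rw [ggMarks, heq, ggAux_append]; rfl
  have hs : (l₁ ++ x :: l₂).Pairwise (· ≤ ·) := heq ▸ rev_sorted π
  have hpa := List.pairwise_append.mp hs
  have hl₂ : ∀ b ∈ l₂, x ≤ b := (List.pairwise_cons.mp hpa.2.1).1
  have hl₁ : ∀ a ∈ l₁, a < x := fun a ha =>
    lt_of_le_of_ne (hpa.2.2 a ha x List.mem_cons_self) (fun e => hnot (e ▸ ha))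
  have hrest_marked : ∀ q n, (q, n) ∈ rest → Marked π q n := by
    intro q n hqn
    rw [Marked, hM]
    exact mem_ggAux_of_mem_acc (List.mem_cons_of_mem _ hqn)
  have hrest_lt : ∀ q n, (q, n) ∈ rest → q < x := by
    intro q n hqn
    rcases fst_mem_ggAux hqn with h' | h'
    · simp at h'
    · exact hl₁ _ h'
  have hmex : mex1 S = m := by
    refine mex1_eq h0 ?_ ?_
    · intro hmem
      obtain ⟨⟨q, n⟩, hqn, hn⟩ := List.mem_map.mp hmem
      obtain ⟨hq1, hq2⟩ := List.mem_filter.mp hqn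
      exact hfree q (hrest_lt _ _ hq1) hq2 (hn ▸ hrest_marked _ _ hq1)
    · intro j hj0 hjm
      obtain ⟨q, hqx, hc, hmk⟩ := hblock j hj0 hjm
      have hq' : (q, j) ∈ rest := by
        have hq2 : (q, j) ∈ ggAux ((x, mex1 S) :: rest) l₂ := by rw [← hM]; exact hmk
        rcases fst_mem_ggAux hq2 with h' | h'
        · rcases List.mem_cons.mp h' with h'' | h''
          · exact absurd (show q = x from congrArg Prod.fst h'') (by omega)
          · exact h''
        · exact absurd (hl₂ _ h') (by omega)
      exact List.mem_map.mpr ⟨(q, j), List.mem_filter.mpr ⟨hq', hc⟩, rfl⟩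
  rw [Marked, hM, ← hmex]
  exact mem_ggAux_of_mem_acc List.mem_cons_self

lemma map_fst_ggMarks (π : Partition) : (ggMarks π).map Prod.fst = π.parts := by
  rw [ggMarks]
  have : ∀ (l : List ℕ) (acc : List (ℕ × ℕ)),
      (ggAux acc l).map Prod.fst = l.reverse ++ acc.map Prod.fst := by
    intro l
    induction l with
    | nil => intro acc; rfl
    | cons a l ih => intro acc; simp [ggAux, ih]
  simp [this]

lemma row_sorted (π : Partition) (i : ℕ) : (row π i).Pairwise (· ≥ ·) := by
  have h1 : List.Sublist (row π i) π.parts := by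
    rw [row]
    have h := (List.filter_sublist (l := ggMarks π)
      (p := fun q => q.2 == i)).map Prod.fst
    rwa [map_fst_ggMarks] at h
  exact π.sorted.sublist h1

lemma mem_row_of_marked {π : Partition} {x m : ℕ} (h : Marked π x m) : x ∈ row π m :=
  List.mem_map.mpr ⟨(x, m), List.mem_filter.mpr ⟨h, by simp⟩, rfl⟩

lemma rowVal_succ (π : Partition) {i j : ℕ} (h : j < (row π i).length) :
    rowVal π i (j + 1) = natE ((row π i)[j]) := by
  rw [rowVal, if_neg (by omega)]
  simp [List.getElem?_eq_getElem h]

lemma natE_ne_bot (n : ℕ) : natE n ≠ ⊥ := EReal.coe_ne_bot _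

lemma rowVal_succ_none (π : Partition) {i j : ℕ} (h : ¬ j < (row π i).length) :
    rowVal π i (j + 1) = ⊥ := by
  rw [rowVal, if_neg (by omega)]
  simp [List.getElem?_eq_none (by omega : (row π i).length ≤ j)]

lemma startPair_cases (π : Partition) (b : ℕ)
    (h : (startPair π (b+1)).1 = 0 ∨ (startPair π (b+1)).1 = 1) :
    Marked π (nth π 2 (b+1) - 1) 1 ∨ Marked π (nth π 2 (b+1) - 2) 1 := by
  simp only [startPair] at h
  split_ifs at h <;> simp_all

lemma natE_lt_natE {a b : ℕ} : natE a < natE b ↔ a < b := by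
  rw [natE, natE, EReal.coe_lt_coe_iff]
  exact_mod_cast Iff.rfl

lemma natE_le_natE {a b : ℕ} : natE a ≤ natE b ↔ a ≤ b := by
  rw [natE, natE, EReal.coe_le_coe_iff]
  exact_mod_cast Iff.rfl

/-- Corollary 2.7: if `π ∈ C_<(k,r|p,t)` and `π^{(2)}_p ≥ 2t + 6`, then
`2t+2` and `2t+4` cannot both occur in `π`. -/
theorem not_both_occur (k r p t : ℕ) (hrk : r ≤ k) (hr : 3 ≤ r)
    (π : Partition) (hπ : π ∈ Clt k r p t)
    (hge : natE (2 * t + 6) ≤ rowVal π 2 p) :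
    ¬ ((2 * t + 2) ∈ π.parts ∧ (2 * t + 4) ∈ π.parts) := by
  rintro ⟨h2, h4⟩
  obtain ⟨hC, hodd, hlt1, hlt2, h5, h6⟩ := hπ
  have h2t1 : (2*t+1) ∉ π.parts := fun h => by have := hodd _ h (by omega); omega
  have h2t3 : (2*t+3) ∉ π.parts := fun h => by have := hodd _ h (by omega); omega
  have hmono : ∀ i j (hi : i < (row π 2).length) (hj : j < (row π 2).length),
      i ≤ j → (row π 2)[j] ≤ (row π 2)[i] := by
    intro i j hi hj hij
    rcases eq_or_lt_of_le hij with rfl | h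
    · exact le_refl _
    · exact List.pairwise_iff_getElem.mp (row_sorted π 2) i j hi hj h
  have loc : ∀ x, Marked π x 2 → x ≤ 2*t+5 →
      ∃ hp : p < (row π 2).length, x ≤ (row π 2)[p] ∧ (row π 2)[p] ≤ 2*t := by
    intro x hx hxle
    obtain ⟨j, hj, hjx⟩ := List.mem_iff_getElem.mp (mem_row_of_marked hx)
    have hjp : p ≤ j := by
      by_contra hc
      push_neg at hc
      by_cases hplen : p - 1 < (row π 2).length
      · have hrv : rowVal π 2 p = natE ((row π 2)[p-1]) := by
          have h' := rowVal_succ π hplen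
          rwa [show (p-1)+1 = p from by omega] at h'
        rw [hrv] at hge
        have hy : 2*t+6 ≤ (row π 2)[p-1] := natE_le_natE.mp hge
        have := hmono j (p-1) hj hplen (by omega)
        omega
      · have hrv : rowVal π 2 p = ⊥ := by
          have h' := rowVal_succ_none π (i := 2) (j := p-1) hplen
          rwa [show (p-1)+1 = p from by omega] at h'
        rw [hrv] at hge
        exact absurd (le_bot_iff.mp hge) (natE_ne_bot _)
    have hp : p < (row π 2).length := lt_of_le_of_lt hjp hj
    have h1 : x ≤ (row π 2)[p] := by
      have := hmono p j hp hj hjp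
      omega
    have h2' : (row π 2)[p] ≤ 2*t := by
      have hrv1 : rowVal π 2 (p+1) = natE ((row π 2)[p]) := rowVal_succ π hp
      rw [hrv1] at hlt1
      have := natE_lt_natE.mp hlt1
      omega
    exact ⟨hp, h1, h2'⟩
  have hB : ∀ x, 2*t+1 ≤ x → x ≤ 2*t+5 → ¬ Marked π x 2 := by
    intro x hx1 hx2 hmk
    obtain ⟨hp, hxle, hle⟩ := loc x hmk hx2
    omega
  have hB2 := hB (2*t+2) (by omega) (by omega)
  have hB4 := hB (2*t+4) (by omega) (by omega)
  have hA1 : ¬ Marked π (2*t+2) 1 := by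
    intro h1
    apply hB4
    refine marked_of_mex h4 (by omega) ?_ ?_
    · intro j hj0 hj2
      have hj : j = 1 := by omega
      subst hj
      exact ⟨2*t+2, by omega, (conflict_even_iff (by omega)).mpr (by omega), h1⟩
    · intro q hq hc hmk
      have hd := (conflict_even_iff (by omega)).mp hc
      have hq' : q = 2*t+2 ∨ q = 2*t+3 := by omega
      rcases hq' with rfl | rfl
      · exact hB2 hmk
      · exact h2t3 (marked_mem hmk)
  have hM1 : Marked π (2*t) 1 := by
    by_contra h
    apply hA1
    refine marked_of_mex h2 (by omega) (fun j hj0 hj1 => absurd hj1 (by omega)) ?_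
    intro q hq hc hmk
    have hd := (conflict_even_iff (by omega)).mp hc
    have hq' : q = 2*t ∨ q = 2*t+1 := by omega
    rcases hq' with rfl | rfl
    · exact h hmk
    · exact h2t1 (marked_mem hmk)
  have hM2 : Marked π (2*t) 2 := by
    by_contra h
    apply hB2
    refine marked_of_mex h2 (by omega) ?_ ?_
    · intro j hj0 hj2
      have hj : j = 1 := by omega
      subst hj
      exact ⟨2*t, by omega, (conflict_even_iff (by omega)).mpr (by omega), hM1⟩
    · intro q hq hc hmk
      have hd := (conflict_even_iff (by omega)).mp hc
      have hq' : q = 2*t ∨ q = 2*t+1 := by omega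
      rcases hq' with rfl | rfl
      · exact h hmk
      · exact h2t1 (marked_mem hmk)
  have ht1 : 1 ≤ t := by
    have := π.pos _ (marked_mem hM1)
    omega
  obtain ⟨hp, hxle, hle⟩ := loc (2*t) hM2 (by omega)
  have hLp : (row π 2)[p] = 2*t := by omega
  have hrv : rowVal π 2 (p+1) = natE (2*t) := by rw [rowVal_succ π hp, hLp]
  have hst := h6 hrv
  have hv : nth π 2 (p+1) = 2*t := by
    rw [nth, Nat.add_sub_cancel, List.getD_eq_getElem _ _ hp, hLp]
  have hkey := startPair_cases π p hst
  rw [hv] at hkey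
  rcases hkey with h | h
  · exact marked_excl hM1 h (by omega) ((conflict_even_iff (by omega)).mpr (by omega))
  · exact marked_excl hM1 h (by omega) ((conflict_even_iff (by omega)).mpr (by omega))

end Bressoud
end

section
/- For k ≥ r ≥ 3 and p,t ≥ 0, let π be a partition in C_<(k,r|p,t) such that π^{(2)}_p = 2t+2 with starting type s₃. Then π^{(2)}_{p₁} + 4 occurs at most once as a part of π, where p₁ is the first starting cluster index of π. -/
namespace Bressoud

/-! ### Auxiliary lemmas for Proposition 2.9 -/

section Aux

lemma mem_of_lt_mex1 {s : List ℕ} {m : ℕ} (h0 : 0 < m) (h : m < mex1 s) : m ∈ s := by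
  have := Nat.find_min (exists_pos_not_mem s) h
  push_neg at this
  exact this h0

lemma conflict_self (x : ℕ) : conflict x x = true := by
  unfold conflict; split <;> simp

lemma conflict_of_even {x y : ℕ} (hx : x % 2 = 0) (h : x - y ≤ 2) : conflict x y = true := by
  unfold conflict
  rw [if_neg (by omega)]
  simpa using h

lemma sub_le_of_conflict {x y : ℕ} (h : conflict x y = true) : x - y ≤ 2 := by
  unfold conflict at h
  split at h <;> simp at h <;> omega

/-- The invariant maintained by `ggAux`: parts are in decreasing order,
conflicting entries carry distinct marks, marks are positive, and each mark
is minimal (every smaller positive mark is used by a later conflicting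
entry). -/
def GoodList (L : List (ℕ × ℕ)) : Prop :=
  (L.map Prod.fst).Pairwise (· ≥ ·) ∧
  L.Pairwise (fun a b => conflict a.1 b.1 = true → a.2 ≠ b.2) ∧
  (∀ a ∈ L, 0 < a.2) ∧
  ∀ L₁ (a : ℕ × ℕ) L₂, L = L₁ ++ a :: L₂ → ∀ m, 0 < m → m < a.2 →
    ∃ q ∈ L₂, conflict a.1 q.1 = true ∧ q.2 = m

lemma ggAux_spec_s8 : ∀ (l : List ℕ) (acc : List (ℕ × ℕ)),
    GoodList acc → l.Pairwise (· ≤ ·) → (∀ y ∈ l, ∀ a ∈ acc, a.1 ≤ y) →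
    GoodList (ggAux acc l) ∧
      (ggAux acc l).map Prod.fst = l.reverse ++ acc.map Prod.fst
  | [], acc, h, _, _ => ⟨h, by simp [ggAux]⟩
  | p :: rest, acc, h, hs, hle => by
    obtain ⟨hsort, hpw, hpos, hmex⟩ := h
    set S : List ℕ := (acc.filter fun q => conflict p q.1).map Prod.snd with hS
    set a : ℕ × ℕ := (p, mex1 S) with ha
    have hmemS : ∀ q ∈ acc, conflict p q.1 = true → q.2 ∈ S := by
      intro q hq hc
      exact List.mem_map_of_mem (List.mem_filter.2 ⟨hq, hc⟩)
    have hSrev : ∀ m ∈ S, ∃ q ∈ acc, conflict p q.1 = true ∧ q.2 = m := by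
      intro m hm
      obtain ⟨q, hq, hq2⟩ := List.mem_map.1 hm
      exact ⟨q, (List.mem_filter.1 hq).1, (List.mem_filter.1 hq).2, hq2⟩
    have hgood : GoodList (a :: acc) := by
      refine ⟨?_, ?_, ?_, ?_⟩
      · rw [List.map_cons, List.pairwise_cons]
        exact ⟨fun b hb => by
          obtain ⟨q, hq, rfl⟩ := List.mem_map.1 hb
          exact hle p (by simp) q hq, hsort⟩
      · rw [List.pairwise_cons]
        refine ⟨fun q hq hc => ?_, hpw⟩
        exact fun he => mex1_not_mem S
          (by rw [show mex1 S = q.2 from he]; exact hmemS q hq hc)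
      · rintro b hb
        rcases List.mem_cons.1 hb with rfl | hb
        · exact mex1_pos S
        · exact hpos b hb
      · intro L₁ b L₂ hL m hm0 hmb
        rcases L₁ with _ | ⟨c, L₁⟩
        · simp only [List.nil_append, List.cons.injEq] at hL
          obtain ⟨rfl, rfl⟩ := hL
          exact hSrev m (mem_of_lt_mex1 hm0 hmb)
        · simp only [List.cons_append, List.cons.injEq] at hL
          exact hmex L₁ b L₂ hL.2 m hm0 hmb
    have hs' : rest.Pairwise (· ≤ ·) := hs.of_cons
    have hle' : ∀ y ∈ rest, ∀ b ∈ a :: acc, b.1 ≤ y := by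
      intro y hy b hb
      rcases List.mem_cons.1 hb with rfl | hb
      · exact List.rel_of_pairwise_cons hs hy
      · exact le_trans (hle y (List.mem_cons_of_mem _ hy) b hb)
          (le_refl y)
    have := ggAux_spec_s8 rest (a :: acc) hgood hs' hle'
    refine ⟨by simpa [ggAux] using this.1, ?_⟩
    show (ggAux (a :: acc) rest).map Prod.fst = _
    rw [this.2]
    simp [ha]

lemma ggMarks_good (π : Partition) :
    GoodList (ggMarks π) ∧ (ggMarks π).map Prod.fst = π.parts := by
  have hs : π.parts.reverse.Pairwise (· ≤ ·) := by
    rw [List.pairwise_reverse]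
    exact π.sorted
  have h0 : GoodList ([] : List (ℕ × ℕ)) :=
    ⟨by simp, by simp, by simp, by intro L₁ a L₂ h; simp at h⟩
  obtain ⟨hg, hm⟩ := ggAux_spec_s8 π.parts.reverse [] h0 hs (by simp)
  exact ⟨hg, by simpa [ggMarks] using hm⟩

variable {π : Partition}

lemma marked_mem_parts {x m : ℕ} (h : Marked π x m) : x ∈ π.parts := by
  have := List.mem_map_of_mem (f := Prod.fst) h
  rwa [(ggMarks_good π).2] at this

lemma marked_pos {x m : ℕ} (h : Marked π x m) : 0 < m :=
  (ggMarks_good π).1.2.2.1 _ h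

/-- The mex property, in usable form. -/
lemma exists_conflict_marked {x m m' : ℕ} (h : Marked π x m) (h0 : 0 < m')
    (hlt : m' < m) : ∃ q, q ≤ x ∧ x - q ≤ 2 ∧ Marked π q m' := by
  obtain ⟨L₁, L₂, hL⟩ := List.append_of_mem h
  obtain ⟨q, hqmem, hconf, hq2⟩ := (ggMarks_good π).1.2.2.2 L₁ _ L₂ hL m' h0 hlt
  have hqle : q.1 ≤ x := by
    have hsorted := (ggMarks_good π).1.1
    rw [hL] at hsorted
    have hsubl : List.Sublist ((x, m) :: L₂) (L₁ ++ (x, m) :: L₂) :=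
      List.sublist_append_right _ _
    have h2 := hsorted.sublist (hsubl.map Prod.fst)
    rw [List.map_cons] at h2
    exact List.rel_of_pairwise_cons h2 (List.mem_map_of_mem hqmem)
  have hmem : q ∈ ggMarks π := by
    rw [hL]; exact List.mem_append_right _ (List.mem_cons_of_mem _ hqmem)
  have hq : (q.1, m') = q := by rw [← hq2]
  exact ⟨q.1, hqle, sub_le_of_conflict hconf, by rwa [Marked, hq]⟩

/-- Two conflicting parts get different marks. -/
lemma marks_ne_of_conflict {x y mx my : ℕ} (hx : Marked π x mx)
    (hy : Marked π y my) (hlt : y < x) (hc : conflict x y = true) : mx ≠ my := by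
  obtain ⟨i, hi⟩ := List.get_of_mem hx
  obtain ⟨j, hj⟩ := List.get_of_mem hy
  have hsorted : ∀ (u v : Fin (ggMarks π).length), u < v →
      ((ggMarks π).get u).1 ≥ ((ggMarks π).get v).1 := by
    have := (ggMarks_good π).1.1
    rw [List.pairwise_map, List.pairwise_iff_get] at this
    exact this
  have hpw := (ggMarks_good π).1.2.1
  rw [List.pairwise_iff_get] at hpw
  rcases lt_trichotomy i j with h | h | h
  · exact fun he => (hpw i j h (by rw [hi, hj]; exact hc)) (by rw [hi, hj, he])
  · exfalso; rw [h, hj] at hi; exact absurd (congrArg Prod.fst hi) (by simp; omega)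
  · exfalso
    have := hsorted j i h
    rw [hi, hj] at this
    omega

/-- A part occurring at least twice receives two different marks. -/
lemma exists_two_marks {x : ℕ} (h : 2 ≤ π.parts.count x) :
    ∃ m₁ m₂, m₁ ≠ m₂ ∧ Marked π x m₁ ∧ Marked π x m₂ := by
  have hdup : List.Sublist [x, x] π.parts := List.duplicate_iff_sublist.1
    (List.duplicate_iff_two_le_count.2 h)
  rw [← (ggMarks_good π).2] at hdup
  obtain ⟨l', hl', hmap⟩ := List.sublist_map_iff.1 hdup
  rcases l' with _ | ⟨a, l'⟩
  · simp at hmap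
  rcases l' with _ | ⟨b, l'⟩
  · simp at hmap
  rcases l' with _ | ⟨c, l'⟩
  swap
  · simp at hmap
  simp only [List.map_cons, List.map_nil, List.cons.injEq, and_true] at hmap
  obtain ⟨ha, hb⟩ := hmap
  have hpw := ((ggMarks_good π).1.2.1).sublist hl'
  rw [List.pairwise_cons] at hpw
  have hne : a.2 ≠ b.2 := hpw.1 b (by simp) (by rw [← ha, ← hb]; exact conflict_self x)
  have hma : a ∈ ggMarks π := hl'.subset (by simp)
  have hmb : b ∈ ggMarks π := hl'.subset (by simp)
  refine ⟨a.2, b.2, hne, ?_, ?_⟩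
  · rwa [Marked, show (x, a.2) = a from by rw [ha]]
  · rwa [Marked, show (x, b.2) = b from by rw [hb]]

lemma mem_row_iff {y i : ℕ} : y ∈ row π i ↔ Marked π y i := by
  unfold row Marked
  constructor
  · intro h
    obtain ⟨q, hq, rfl⟩ := List.mem_map.1 h
    obtain ⟨hq1, hq2⟩ := List.mem_filter.1 hq
    have : q.2 = i := by simpa using hq2
    rwa [show (q.1, i) = q by rw [← this]]
  · intro h
    have hmem : (y, i) ∈ (ggMarks π).filter (fun q => q.2 == i) :=
      List.mem_filter.2 ⟨h, by simp⟩
    exact List.mem_map_of_mem (f := Prod.fst) hmem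

lemma row_pairwise (i : ℕ) : (row π i).Pairwise (· > ·) := by
  have h1 : (ggMarks π).Pairwise (fun a b => a.1 ≥ b.1) := by
    have := (ggMarks_good π).1.1
    rwa [List.pairwise_map] at this
  have h3 := h1.and (ggMarks_good π).1.2.1
  have h4 := h3.filter (fun q => q.2 == i)
  unfold row
  rw [List.pairwise_map]
  refine List.Pairwise.imp_of_mem ?_ h4
  intro a b ha hb hab
  have ha2 : a.2 = i := by simpa using (List.mem_filter.1 ha).2
  have hb2 : b.2 = i := by simpa using (List.mem_filter.1 hb).2
  rcases lt_or_eq_of_le (hab.1 : b.1 ≤ a.1) with hlt | he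
  · exact hlt
  · exfalso
    apply hab.2 (he ▸ conflict_self b.1)
    rw [ha2, hb2]

lemma nth_eq_get {i j : ℕ} (h1 : 1 ≤ j) (h2 : j ≤ Nmk π i) :
    nth π i j = (row π i)[j-1]'(by unfold Nmk at h2; omega) := by
  unfold nth
  exact List.getD_eq_getElem _ _ _

lemma nth_marked {i j : ℕ} (h1 : 1 ≤ j) (h2 : j ≤ Nmk π i) :
    Marked π (nth π i j) i := by
  rw [nth_eq_get h1 h2]
  exact mem_row_iff.1 (List.getElem_mem _)

lemma nth_lt_nth {i j j' : ℕ} (h1 : 1 ≤ j) (hjj : j < j') (h2 : j' ≤ Nmk π i) :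
    nth π i j' < nth π i j := by
  have hpw := row_pairwise (π := π) i
  rw [List.pairwise_iff_get] at hpw
  have hj : j - 1 < (row π i).length := by unfold Nmk at h2; omega
  have hj' : j' - 1 < (row π i).length := by unfold Nmk at h2; omega
  have := hpw ⟨j-1, hj⟩ ⟨j'-1, hj'⟩ (by simp; omega)
  rw [nth_eq_get h1 (by omega), nth_eq_get (by omega) h2]
  simpa [List.get_eq_getElem] using this

lemma nth_le_nth {i j j' : ℕ} (h1 : 1 ≤ j) (hjj : j ≤ j') (h2 : j' ≤ Nmk π i) :
    nth π i j' ≤ nth π i j := by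
  rcases eq_or_lt_of_le hjj with rfl | h
  · exact le_refl _
  · exact (nth_lt_nth h1 h h2).le

lemma exists_index_of_marked {y i : ℕ} (h : Marked π y i) :
    ∃ j, 1 ≤ j ∧ j ≤ Nmk π i ∧ nth π i j = y := by
  have hy := mem_row_iff.2 h
  obtain ⟨n, hn, hget⟩ := List.getElem_of_mem hy
  refine ⟨n + 1, by omega, by unfold Nmk; omega, ?_⟩
  rw [nth_eq_get (by omega) (by unfold Nmk; omega)]
  simpa using hget

lemma natE_injective {a b : ℕ} (h : natE a = natE b) : a = b := by
  unfold natE at h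
  rw [EReal.coe_eq_coe_iff] at h
  exact_mod_cast h

lemma rowVal_spec {i j v : ℕ} (h : rowVal π i j = natE v) :
    1 ≤ j ∧ j ≤ Nmk π i ∧ nth π i j = v := by
  unfold rowVal at h
  split at h
  · exact absurd h.symm (by unfold natE; exact EReal.coe_ne_top _)
  · rename_i hj
    split at h
    · rename_i x hx
      have hlt : j - 1 < (row π i).length := by
        by_contra hc
        rw [List.getElem?_eq_none (by omega)] at hx
        simp at hx
      have hxv : x = v := natE_injective h
      have hget : (row π i)[j-1]'hlt = x := by
        rw [List.getElem?_eq_getElem hlt] at hx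
        exact Option.some.inj hx
      refine ⟨by omega, by unfold Nmk; omega, ?_⟩
      rw [nth_eq_get (by omega) (by unfold Nmk; omega), hget, hxv]
    · exact absurd h (by unfold natE; exact EReal.bot_ne_coe _)

/-- Explicit form of `startPair` at a positive index. -/
lemma startPair_succ (π : Partition) (b : ℕ) :
    startPair π (b + 1) =
    if bigL π < b + 1 then (-1, 0)
    else
      if decide (Marked π (nth π 2 (b+1) - 1) 1) &&
          (if b = 0 then !decide ((nth π 2 (b+1) + 2) ∈ π.parts)
           else !decide (Marked π (nth π 2 (b+1) + 2) 1) ||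
                decide ((startPair π b).2 = nth π 2 (b+1) + 2)) then
        (0, nth π 2 (b+1) - 1)
      else if decide (Marked π (nth π 2 (b+1) - 2) 1) &&
          (if b = 0 then !decide ((nth π 2 (b+1) + 2) ∈ π.parts)
           else !decide (Marked π (nth π 2 (b+1) + 2) 1) ||
                decide ((startPair π b).2 = nth π 2 (b+1) + 2)) then
        (1, nth π 2 (b+1) - 2)
      else if (if b = 0 then decide (Marked π (nth π 2 (b+1) + 2) 1)
           else decide (Marked π (nth π 2 (b+1) + 2) 1) &&
                !decide ((startPair π b).2 = nth π 2 (b+1) + 2)) then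
        (2, nth π 2 (b+1) + 2)
      else if decide (Marked π (nth π 2 (b+1)) 1) then (3, nth π 2 (b+1))
      else (9, 0) := rfl

lemma not_bigL_lt_of_startType_three {b : ℕ} (hb : 1 ≤ b)
    (h : startType π b = 3) : ¬ bigL π < b := by
  intro hlt
  obtain ⟨b', rfl⟩ : ∃ b', b = b' + 1 := ⟨b - 1, by omega⟩
  unfold startType at h
  rw [startPair_succ, if_pos hlt] at h
  simp at h

lemma startType_eq_three {b : ℕ} (hb : 1 ≤ b) (hbig : ¬ bigL π < b)
    (h1 : ¬ Marked π (nth π 2 b - 1) 1) (h2 : ¬ Marked π (nth π 2 b - 2) 1)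
    (h3 : ¬ Marked π (nth π 2 b + 2) 1) (h4 : Marked π (nth π 2 b) 1) :
    startType π b = 3 := by
  obtain ⟨b', rfl⟩ : ∃ b'', b = b'' + 1 := ⟨b - 1, by omega⟩
  unfold startType
  rw [startPair_succ, if_neg hbig]
  rw [decide_eq_false h1, decide_eq_false h2, decide_eq_false h3,
    decide_eq_true h4]
  simp

lemma marked_of_startType_three {b : ℕ} (hb : 1 ≤ b)
    (h : startType π b = 3) : Marked π (nth π 2 b) 1 := by
  obtain ⟨b', rfl⟩ : ∃ b'', b = b'' + 1 := ⟨b - 1, by omega⟩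
  unfold startType at h
  rw [startPair_succ] at h
  split_ifs at h <;> simp_all

lemma chain_iff (π : Partition) (p j : ℕ) :
    (((List.range' j (p + 1 - j)).all fun i =>
      decide (nth π 2 i = nth π 2 p + 4 * (p - i)) &&
      decide (startType π i = startType π p)) = true) ↔
    (∀ i, j ≤ i → i ≤ p →
      nth π 2 i = nth π 2 p + 4 * (p - i) ∧ startType π i = startType π p) := by
  rw [List.all_eq_true]
  constructor
  · intro h i h1 h2
    have := h i (by rw [List.mem_range'_1]; omega)
    simpa using this
  · intro h i hi
    rw [List.mem_range'_1] at hi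
    have := h i hi.1 (by omega)
    simp [this.1, this.2]

lemma firstCluster_spec (π : Partition) (p : ℕ) (hp : 1 ≤ p) :
    1 ≤ firstCluster π p ∧ firstCluster π p ≤ p ∧
    (∀ i, firstCluster π p ≤ i → i ≤ p →
      nth π 2 i = nth π 2 p + 4 * (p - i) ∧ startType π i = startType π p) ∧
    (∀ j, 1 ≤ j → j ≤ p →
      (∀ i, j ≤ i → i ≤ p →
        nth π 2 i = nth π 2 p + 4 * (p - i) ∧ startType π i = startType π p) →
      firstCluster π p ≤ j) := by
  unfold firstCluster
  set f : ℕ → Bool := fun j =>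
    (List.range' j (p + 1 - j)).all fun i =>
      decide (nth π 2 i = nth π 2 p + 4 * (p - i)) &&
      decide (startType π i = startType π p) with hf
  set l := (List.range' 1 p).filter f with hl
  have hpl : p ∈ l := by
    rw [hl, List.mem_filter]
    refine ⟨by rw [List.mem_range'_1]; omega, ?_⟩
    rw [hf, chain_iff]
    intro i hi1 hi2
    have : i = p := by omega
    subst this
    simp
  have hlsort : l.Pairwise (· < ·) := (List.pairwise_lt_range' (s := 1) (n := p)).filter f
  rcases hle : l with _ | ⟨a, tl⟩
  · rw [hle] at hpl; simp at hpl
  · have hal : a ∈ l := by rw [hle]; simp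
    have ha1 : 1 ≤ a ∧ a ≤ p := by
      have := (List.mem_filter.1 (hl ▸ hal)).1
      rw [List.mem_range'_1] at this
      omega
    have haf : f a = true := (List.mem_filter.1 (hl ▸ hal)).2
    have hmin : ∀ j ∈ l, a ≤ j := by
      intro j hj
      rw [hle] at hj hlsort
      rcases List.mem_cons.1 hj with rfl | hj
      · exact le_refl _
      · exact (List.rel_of_pairwise_cons hlsort hj).le
    simp only [List.headD_cons]
    refine ⟨ha1.1, ha1.2, ?_, ?_⟩
    · rw [hf, chain_iff] at haf
      exact haf
    · intro j hj1 hjp hchain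
      refine hmin j ?_
      rw [hl, List.mem_filter]
      exact ⟨by rw [List.mem_range'_1]; omega, by rw [hf, chain_iff]; exact hchain⟩

end Aux

/-- Proposition 2.9: if `π ∈ C_<(k,r|p,t)` with `π^{(2)}_p = 2t + 2` of
starting type `s₃`, then `π^{(2)}_{p₁} + 4` occurs at most once in `π`,
where `p₁` is the first starting cluster index of `π`. -/
theorem firstCluster_plus_four_once (k r p t : ℕ) (hrk : r ≤ k) (hr : 3 ≤ r)
    (π : Partition) (hπ : π ∈ Clt k r p t)
    (hval : rowVal π 2 p = natE (2 * t + 2)) (hst : startType π p = 3) :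
    π.parts.count (nth π 2 (firstCluster π p) + 4) ≤ 1 := by
  obtain ⟨hC, hodd, -, -, -, -⟩ := hπ
  obtain ⟨hp1, hpN, hnthp⟩ := rowVal_spec hval
  obtain ⟨hp₁1, hp₁p, hchain, hmin⟩ := firstCluster_spec π p hp1
  set p₁ := firstCluster π p with hp₁def
  have hch₁ := hchain p₁ le_rfl hp₁p
  have hnthp₁ : nth π 2 p₁ = 2 * t + 2 + 4 * (p - p₁) := by rw [hch₁.1, hnthp]
  set x := nth π 2 p₁ + 4 with hxdef
  by_contra hcnt
  push_neg at hcnt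
  have hx : x = 2 * t + 2 + 4 * (p - p₁) + 4 := by rw [hxdef, hnthp₁]
  have hxe : x % 2 = 0 := by omega
  have hstp₁ : startType π p₁ = 3 := by rw [hch₁.2, hst]
  have hM1 : Marked π (x - 4) 1 := by
    have := marked_of_startType_three hp₁1 hstp₁
    rwa [show nth π 2 p₁ = x - 4 by omega] at this
  have hM2 : Marked π (x - 4) 2 := by
    have := nth_marked (π := π) (i := 2) hp₁1 (le_trans hp₁p hpN)
    rwa [show nth π 2 p₁ = x - 4 by omega] at this
  have hnotodd : ∀ y m', x - 4 ≤ y → y % 2 = 1 → ¬ Marked π y m' := by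
    intro y m' hy hyo hM
    have := hodd y (marked_mem_parts hM) hyo
    omega
  have hnx2_2 : ¬ Marked π (x - 2) 2 := fun hM =>
    marks_ne_of_conflict hM hM2 (by omega)
      (conflict_of_even (by omega) (by omega)) rfl
  have hnx2_1 : ¬ Marked π (x - 2) 1 := fun hM =>
    marks_ne_of_conflict hM hM1 (by omega)
      (conflict_of_even (by omega) (by omega)) rfl
  obtain ⟨m₁, m₂, hm12, hMa, hMb⟩ := exists_two_marks (π := π) (x := x) (by omega)
  have hbigm : ∃ m, 2 ≤ m ∧ Marked π x m := by
    have h1 := marked_pos hMa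
    have h2 := marked_pos hMb
    rcases Nat.lt_or_ge m₁ 2 with h | h
    · exact ⟨m₂, by omega, hMb⟩
    · exact ⟨m₁, h, hMa⟩
  obtain ⟨m, hm2, hMm⟩ := hbigm
  have hMx2 : Marked π x 2 := by
    rcases eq_or_lt_of_le hm2 with he | hlt
    · rwa [← he] at hMm
    · obtain ⟨q, hq1, hq2, hq3⟩ := exists_conflict_marked hMm (by omega) hlt
      have hq : q = x - 2 ∨ q = x - 1 ∨ q = x := by omega
      rcases hq with rfl | rfl | rfl
      · exact absurd hq3 hnx2_2
      · exact absurd hq3 (hnotodd _ _ (by omega) (by omega))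
      · exact hq3
  have hMx1 : Marked π x 1 := by
    obtain ⟨q, hq1, hq2, hq3⟩ := exists_conflict_marked hMx2 one_pos one_lt_two
    have hq : q = x - 2 ∨ q = x - 1 ∨ q = x := by omega
    rcases hq with rfl | rfl | rfl
    · exact absurd hq3 hnx2_1
    · exact absurd hq3 (hnotodd _ _ (by omega) (by omega))
    · exact hq3
  have hnxp2 : ¬ Marked π (x + 2) 1 := fun hM =>
    marks_ne_of_conflict hM hMx1 (by omega)
      (conflict_of_even (by omega) (by omega)) rfl
  obtain ⟨j, hj1, hjN, hjval⟩ := exists_index_of_marked hMx2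
  have hjp₁ : j < p₁ := by
    by_contra hc
    push_neg at hc
    rcases eq_or_lt_of_le hc with rfl | hlt
    · omega
    · have := nth_lt_nth hp₁1 hlt hjN
      omega
  have hp₁2 : 2 ≤ p₁ := by omega
  have hub : nth π 2 (p₁ - 1) ≤ x := by
    rw [← hjval]
    exact nth_le_nth hj1 (by omega) (by omega)
  have hlb : x - 4 < nth π 2 (p₁ - 1) := by
    have := nth_lt_nth (show 1 ≤ p₁ - 1 by omega)
      (show p₁ - 1 < p₁ by omega) (le_trans hp₁p hpN)
    omega
  have hMp₁1 : Marked π (nth π 2 (p₁ - 1)) 2 :=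
    nth_marked (by omega) (by omega)
  have hnth' : nth π 2 (p₁ - 1) = x := by
    have he : nth π 2 (p₁ - 1) % 2 = 0 := by
      by_contra ho
      exact hnotodd _ _ (by omega) (by omega) hMp₁1
    have h2 : nth π 2 (p₁ - 1) = x - 2 ∨ nth π 2 (p₁ - 1) = x := by omega
    rcases h2 with h' | h'
    · exact absurd (h' ▸ hMp₁1) hnx2_2
    · exact h'
  have hst' : startType π (p₁ - 1) = 3 := by
    refine startType_eq_three (by omega) ?_ ?_ ?_ ?_ ?_
    · have := not_bigL_lt_of_startType_three hp₁1 hstp₁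
      omega
    · rw [hnth']
      exact hnotodd (x - 1) 1 (by omega) (by omega)
    · rw [hnth']
      exact hnx2_1
    · rw [hnth']
      exact hnxp2
    · rw [hnth']
      exact hMx1
  have hcontra := hmin (p₁ - 1) (by omega) (by omega) ?_
  · omega
  · intro i hi1 hi2
    rcases eq_or_lt_of_le hi1 with rfl | hlt
    · refine ⟨?_, by rw [hst', hst]⟩
      rw [hnth', hnthp, hx]
      omega
    · exact hchain i (by omega) hi2

end Bressoud
end
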